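/- Let X₀, X₁ ⊆ ℝ^n (n ≥ 1) be nonempty compact convex, Φ ∈ ℝ^{n×n}, and M symmetric positive definite. Then max_{x₀∈X₀,x₁∈X₁} (Φx₀-x₁)ᵀM⁻¹(Φx₀-x₁) = { max_{y ∈ S^{n-1}} ( h_{X₀}(Φᵀ M^{-1/2} y) + h_{X₁}(-M^{-1/2} y) ) }². -/

import Mathlib

open RealInnerProductSpace Matrix

noncomputable def sptFn {n : ℕ} (K : Set (EuclideanSpace ℝ (Fin n)))
    (y : EuclideanSpace ℝ (Fin n)) : ℝ :=
  sSup ((fun x => ⟪y, x⟫) '' K)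

private lemma csSup_image_eq' {α : Type*} {K : Set α} {f : α → ℝ} {a : α} (ha : a ∈ K)
    (h : ∀ x ∈ K, f x ≤ f a) : sSup (f '' K) = f a :=
  IsGreatest.csSup_eq ⟨⟨a, ha, rfl⟩, by rintro _ ⟨x, hx, rfl⟩; exact h x hx⟩

theorem max_quadratic_eq_sq_max_support {n : ℕ} (hn : 1 ≤ n)
    (X₀ X₁ : Set (EuclideanSpace ℝ (Fin n)))
    (h₀ : X₀.Nonempty) (h₁ : X₁.Nonempty)
    (hc₀ : IsCompact X₀) (hc₁ : IsCompact X₁)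
    (hv₀ : Convex ℝ X₀) (hv₁ : Convex ℝ X₁)
    (Φ M S : Matrix (Fin n) (Fin n) ℝ) (hM : M.PosDef)
    (hS : S.PosDef) (hSM : S * S = M) :
    sSup {r : ℝ | ∃ x₀ ∈ X₀, ∃ x₁ ∈ X₁,
        r = ((show EuclideanSpace ℝ (Fin n) from WithLp.toLp 2 (Φ.mulVec x₀)) - x₁) ⬝ᵥ
            M⁻¹.mulVec ((show EuclideanSpace ℝ (Fin n) from WithLp.toLp 2 (Φ.mulVec x₀)) - x₁)}
      = (sSup {v : ℝ | ∃ y ∈ Metric.sphere (0 : EuclideanSpace ℝ (Fin n)) 1,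
          v = sptFn X₀ (show EuclideanSpace ℝ (Fin n) from WithLp.toLp 2 (Φᵀ.mulVec (S⁻¹.mulVec y)))
            + sptFn X₁ (show EuclideanSpace ℝ (Fin n) from WithLp.toLp 2 (-(S⁻¹.mulVec y)))}) ^ 2 := by
  classical
  have hSt : Sᵀ = S := by simpa using hS.1.eq
  have hSinvt : (S⁻¹)ᵀ = S⁻¹ := by rw [Matrix.transpose_nonsing_inv, hSt]
  have hMinv : M⁻¹ = S⁻¹ * S⁻¹ := by rw [← hSM, Matrix.mul_inv_rev]
  have hdot : ∀ x y : EuclideanSpace ℝ (Fin n), ⟪x, y⟫ = x ⬝ᵥ y := fun x y => by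
    simp [PiLp.inner_apply, dotProduct, RCLike.inner_apply, mul_comm]
  -- the set A of transformed differences
  set T : EuclideanSpace ℝ (Fin n) × EuclideanSpace ℝ (Fin n) → EuclideanSpace ℝ (Fin n) :=
    fun p => (show EuclideanSpace ℝ (Fin n) from
      WithLp.toLp 2 (S⁻¹.mulVec ((show EuclideanSpace ℝ (Fin n) from WithLp.toLp 2 (Φ.mulVec p.1)) - p.2))) with hT
  set A : Set (EuclideanSpace ℝ (Fin n)) := T '' (X₀ ×ˢ X₁) with hA
  have hTc : Continuous T := by
    apply (PiLp.continuous_toLp 2 _).comp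
    apply Continuous.matrix_mulVec continuous_const
    exact (PiLp.continuous_ofLp 2 _).comp (Continuous.sub ((PiLp.continuous_toLp 2 _).comp
      (Continuous.matrix_mulVec continuous_const ((PiLp.continuous_ofLp 2 _).comp continuous_fst)))
      continuous_snd)
  have hAc : IsCompact A := (hc₀.prod hc₁).image hTc
  have hAne : A.Nonempty := (h₀.prod h₁).image T
  obtain ⟨z₀, hz₀A, hz₀max⟩ := hAc.exists_isMaxOn hAne continuous_norm.continuousOn
  have hz₀max' : ∀ z ∈ A, ‖z‖ ≤ ‖z₀‖ := fun z hz => hz₀max hz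
  -- quadratic form is squared norm
  have hquad : ∀ (w : EuclideanSpace ℝ (Fin n)),
      w ⬝ᵥ M⁻¹.mulVec w
        = ‖(show EuclideanSpace ℝ (Fin n) from WithLp.toLp 2 (S⁻¹.mulVec w))‖ ^ 2 := by
    intro w
    have h2 : (S⁻¹.mulVec w) ⬝ᵥ (S⁻¹.mulVec w)
        = ‖(show EuclideanSpace ℝ (Fin n) from WithLp.toLp 2 (S⁻¹.mulVec w))‖ ^ 2 := by
      exact (hdot (WithLp.toLp 2 (S⁻¹.mulVec w)) (WithLp.toLp 2 (S⁻¹.mulVec w))).symm.trans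
        (real_inner_self_eq_norm_sq _)
    rw [hMinv, ← Matrix.mulVec_mulVec, Matrix.dotProduct_mulVec, ← Matrix.mulVec_transpose,
      hSinvt, h2]
  -- LHS set is image of squared norm over A
  have hLset : {r : ℝ | ∃ x₀ ∈ X₀, ∃ x₁ ∈ X₁,
        r = ((show EuclideanSpace ℝ (Fin n) from WithLp.toLp 2 (Φ.mulVec x₀)) - x₁) ⬝ᵥ
            M⁻¹.mulVec ((show EuclideanSpace ℝ (Fin n) from WithLp.toLp 2 (Φ.mulVec x₀)) - x₁)}
      = (fun z => ‖z‖ ^ 2) '' A := by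
    ext r
    constructor
    · rintro ⟨x₀, hx₀, x₁, hx₁, rfl⟩
      exact ⟨T (x₀, x₁), Set.mem_image_of_mem T (Set.mk_mem_prod hx₀ hx₁),
        (hquad ((show EuclideanSpace ℝ (Fin n) from WithLp.toLp 2 (Φ.mulVec x₀)) - x₁)).symm⟩
    · rintro ⟨z, ⟨⟨x₀, x₁⟩, ⟨hx₀, hx₁⟩, rfl⟩, rfl⟩
      exact ⟨x₀, hx₀, x₁, hx₁, (hquad ((show EuclideanSpace ℝ (Fin n) from WithLp.toLp 2 (Φ.mulVec x₀)) - x₁)).symm⟩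
  have hLHS : sSup ((fun z => ‖z‖ ^ 2) '' A) = ‖z₀‖ ^ 2 :=
    csSup_image_eq' hz₀A (fun z hz => pow_le_pow_left₀ (norm_nonneg _) (hz₀max' z hz) 2)
  -- key linear algebra identity
  have key : ∀ (y x₀ x₁ : EuclideanSpace ℝ (Fin n)),
      ⟪y, T (x₀, x₁)⟫
        = ⟪(show EuclideanSpace ℝ (Fin n) from WithLp.toLp 2 (Φᵀ.mulVec (S⁻¹.mulVec y))), x₀⟫
          + ⟪(show EuclideanSpace ℝ (Fin n) from WithLp.toLp 2 (-(S⁻¹.mulVec y))), x₁⟫ := by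
    intro y x₀ x₁
    rw [hdot, hdot, hdot]
    show y.ofLp ⬝ᵥ S⁻¹.mulVec (Φ.mulVec x₀.ofLp - x₁.ofLp)
      = (Φᵀ.mulVec (S⁻¹.mulVec y.ofLp)) ⬝ᵥ x₀.ofLp + (-(S⁻¹.mulVec y.ofLp)) ⬝ᵥ x₁.ofLp
    rw [Matrix.dotProduct_mulVec, ← Matrix.mulVec_transpose, hSinvt, dotProduct_sub,
      Matrix.dotProduct_mulVec, ← Matrix.mulVec_transpose, neg_dotProduct]
    ring
  -- sum of support functions equals sup of inner products over A
  have hsum : ∀ y : EuclideanSpace ℝ (Fin n),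
      sptFn X₀ (show EuclideanSpace ℝ (Fin n) from WithLp.toLp 2 (Φᵀ.mulVec (S⁻¹.mulVec y)))
        + sptFn X₁ (show EuclideanSpace ℝ (Fin n) from WithLp.toLp 2 (-(S⁻¹.mulVec y)))
      = sSup ((fun z => ⟪y, z⟫) '' A) := by
    intro y
    set c₀ : EuclideanSpace ℝ (Fin n) := (show EuclideanSpace ℝ (Fin n) from WithLp.toLp 2 (Φᵀ.mulVec (S⁻¹.mulVec y)))
    set c₁ : EuclideanSpace ℝ (Fin n) := (show EuclideanSpace ℝ (Fin n) from WithLp.toLp 2 (-(S⁻¹.mulVec y)))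
    have hcont₀ : Continuous (fun x : EuclideanSpace ℝ (Fin n) => ⟪c₀, x⟫) :=
      continuous_const.inner continuous_id
    have hcont₁ : Continuous (fun x : EuclideanSpace ℝ (Fin n) => ⟪c₁, x⟫) :=
      continuous_const.inner continuous_id
    obtain ⟨a₀, ha₀, ha₀m⟩ := hc₀.exists_isMaxOn h₀ hcont₀.continuousOn
    obtain ⟨a₁, ha₁, ha₁m⟩ := hc₁.exists_isMaxOn h₁ hcont₁.continuousOn
    rw [sptFn, sptFn,
      csSup_image_eq' (f := fun x => ⟪c₀, x⟫) ha₀ (fun x hx => ha₀m hx),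
      csSup_image_eq' (f := fun x => ⟪c₁, x⟫) ha₁ (fun x hx => ha₁m hx)]
    refine (IsGreatest.csSup_eq ⟨?_, ?_⟩).symm
    · exact ⟨T (a₀, a₁), Set.mem_image_of_mem T (Set.mk_mem_prod ha₀ ha₁), key y a₀ a₁⟩
    · rintro _ ⟨z, ⟨⟨x₀, x₁⟩, ⟨hx₀, hx₁⟩, rfl⟩, rfl⟩
      show ⟪y, T (x₀, x₁)⟫ ≤ _
      rw [key y x₀ x₁]
      exact add_le_add (ha₀m hx₀) (ha₁m hx₁)
  -- the supremum over the sphere equals ‖z₀‖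
  have hub : ∀ y ∈ Metric.sphere (0 : EuclideanSpace ℝ (Fin n)) 1,
      sSup ((fun z => ⟪y, z⟫) '' A) ≤ ‖z₀‖ := by
    intro y hy
    apply csSup_le (hAne.image _)
    rintro _ ⟨z, hz, rfl⟩
    calc ⟪y, z⟫ ≤ ‖y‖ * ‖z‖ := real_inner_le_norm _ _
      _ = ‖z‖ := by rw [mem_sphere_zero_iff_norm.1 hy, one_mul]
      _ ≤ ‖z₀‖ := hz₀max' z hz
  have hattain : ∃ y ∈ Metric.sphere (0 : EuclideanSpace ℝ (Fin n)) 1,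
      sSup ((fun z => ⟪y, z⟫) '' A) = ‖z₀‖ := by
    by_cases hz0 : z₀ = 0
    · refine ⟨EuclideanSpace.single (⟨0, hn⟩ : Fin n) (1 : ℝ), ?_, ?_⟩
      · simp [mem_sphere_zero_iff_norm, EuclideanSpace.norm_single]
      · have hall : ∀ z ∈ A, z = 0 := by
          intro z hz
          have := hz₀max' z hz
          rw [hz0, norm_zero] at this
          exact norm_eq_zero.1 (le_antisymm this (norm_nonneg _))
        rw [hz0, norm_zero]
        apply IsGreatest.csSup_eq
        constructor
        · obtain ⟨z, hz⟩ := hAne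
          exact ⟨z, hz, by rw [hall z hz]; simp⟩
        · rintro _ ⟨z, hz, rfl⟩
          rw [hall z hz]; simp
    · have hz0n : ‖z₀‖ ≠ 0 := fun h => hz0 (norm_eq_zero.1 h)
      refine ⟨(‖z₀‖⁻¹ : ℝ) • z₀, ?_, ?_⟩
      · simp [mem_sphere_zero_iff_norm, norm_smul, abs_of_nonneg (inv_nonneg.2 (norm_nonneg z₀)),
          inv_mul_cancel₀ hz0n]
      · apply IsGreatest.csSup_eq
        constructor
        · refine ⟨z₀, hz₀A, ?_⟩
          show ⟪(‖z₀‖⁻¹ : ℝ) • z₀, z₀⟫ = ‖z₀‖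
          rw [real_inner_smul_left, real_inner_self_eq_norm_sq]
          field_simp
        · rintro _ ⟨z, hz, rfl⟩
          calc ⟪(‖z₀‖⁻¹ : ℝ) • z₀, z⟫ ≤ ‖(‖z₀‖⁻¹ : ℝ) • z₀‖ * ‖z‖ := real_inner_le_norm _ _
            _ = ‖z‖ := by
                rw [norm_smul, Real.norm_eq_abs, abs_of_nonneg (inv_nonneg.2 (norm_nonneg z₀)),
                  inv_mul_cancel₀ hz0n, one_mul]
            _ ≤ ‖z₀‖ := hz₀max' z hz
  -- conclude
  have hRHS : sSup {v : ℝ | ∃ y ∈ Metric.sphere (0 : EuclideanSpace ℝ (Fin n)) 1,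
          v = sptFn X₀ (show EuclideanSpace ℝ (Fin n) from WithLp.toLp 2 (Φᵀ.mulVec (S⁻¹.mulVec y)))
            + sptFn X₁ (show EuclideanSpace ℝ (Fin n) from WithLp.toLp 2 (-(S⁻¹.mulVec y)))} = ‖z₀‖ := by
    obtain ⟨y₀, hy₀, hy₀eq⟩ := hattain
    apply IsGreatest.csSup_eq
    constructor
    · exact ⟨y₀, hy₀, by rw [hsum y₀, hy₀eq]⟩
    · rintro _ ⟨y, hy, rfl⟩
      rw [hsum y]
      exact hub y hy
  rw [hLset, hLHS, hRHS]
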